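/- Under the hypotheses of the structural lemma (y_{i1} ≥ ... ≥ y_{in} > 0, ∑_j y_{ij} = 1, and M_i convex with M_i(∑_{j=1}^k y_{ij}) = k/n for all k), the inclusion B ⊆ B_{ΣM_i} holds, where B is the convex hull of the vectors (ε_i ∑_{j=1}^{ℓ_i} y_{ij})_{i=1}^n with ∑ℓ_i ≤ n, ε_i = ±1, and B_{ΣM_i} = {x : ∑_i M_i(|x_i|) ≤ 1}. -/
import Mathlib


open Finset

/-- An Orlicz function: convex on `[0,∞)`, vanishing at `0`, positive on `(0,∞)`. -/
def IsOrlicz (M : ℝ → ℝ) : Prop :=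
  ConvexOn ℝ (Set.Ici 0) M ∧ M 0 = 0 ∧ ∀ t : ℝ, 0 < t → 0 < M t

/-- Legendre conjugate `M*(x) = sup_{t ≥ 0} (x t − M t)`. -/
noncomputable def orliczConj (M : ℝ → ℝ) (x : ℝ) : ℝ :=
  sSup {v : ℝ | ∃ t : ℝ, 0 ≤ t ∧ v = x * t - M t}

/-- Musielak-Orlicz (Luxemburg-type) functional `‖x‖_{Σ M_i}`. -/
noncomputable def musielakNorm {n : ℕ} (M : Fin n → ℝ → ℝ) (x : Fin n → ℝ) : ℝ :=
  sInf {ρ : ℝ | 0 < ρ ∧ ∑ i, M i (|x i| / ρ) ≤ 1}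

/-- Average over all permutations of `{1,…,n}`. -/
noncomputable def permAve (n : ℕ) (f : Equiv.Perm (Fin n) → ℝ) : ℝ :=
  (∑ π : Equiv.Perm (Fin n), f π) / (Nat.factorial n : ℝ)

/-- Maximum of a function on a nonempty `Fin n`. -/
noncomputable def maxFin {n : ℕ} (hn : 0 < n) (g : Fin n → ℝ) : ℝ :=
  Finset.univ.sup' (Finset.univ_nonempty_iff.mpr ⟨⟨0, hn⟩⟩) g

lemma convex_mono_aux {M : ℝ → ℝ} (hc : ConvexOn ℝ (Set.Ici 0) M) (h0 : M 0 = 0)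
    {a b c : ℝ} (ha : 0 ≤ a) (hab : a ≤ b) (hbc : M b ≤ c) (hc0 : 0 ≤ c) : M a ≤ c := by
  rcases eq_or_lt_of_le (ha.trans hab) with hb | hb
  · have haz : a = 0 := le_antisymm (by rw [hb]; exact hab) ha
    rw [haz, h0]; exact hc0
  · set θ := a / b with hθ
    have hθ0 : 0 ≤ θ := div_nonneg ha hb.le
    have hθ1 : θ ≤ 1 := (div_le_one hb).mpr hab
    have hrep : a = (1 - θ) • (0 : ℝ) + θ • b := by
      simp only [smul_eq_mul, mul_zero, zero_add, hθ]
      field_simp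
    have := hc.2 (Set.self_mem_Ici) (Set.mem_Ici.mpr hb.le)
      (by linarith : (0:ℝ) ≤ 1 - θ) hθ0 (by ring)
    calc M a = M ((1 - θ) • (0:ℝ) + θ • b) := by rw [← hrep]
      _ ≤ (1 - θ) * M 0 + θ * M b := this
      _ = θ * M b := by rw [h0]; ring
      _ ≤ θ * c := mul_le_mul_of_nonneg_left hbc hθ0
      _ ≤ 1 * c := mul_le_mul_of_nonneg_right hθ1 hc0
      _ = c := one_mul c

/-- The easy inclusion of the structural lemma: `B ⊆ B_{Σ M_i}`. -/
theorem convexHull_subset_ball (n : ℕ) (y : Fin n → Fin n → ℝ)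
    (M : Fin n → ℝ → ℝ)
    (hdec : ∀ i, ∀ j k : Fin n, j ≤ k → y i k ≤ y i j)
    (hpos : ∀ i j, 0 < y i j)
    (hsum : ∀ i, ∑ j, y i j = 1)
    (hconv : ∀ i, ConvexOn ℝ (Set.Ici 0) (M i))
    (hzero : ∀ i, M i 0 = 0)
    (hval : ∀ i (k : Fin n),
      M i (∑ j : Fin n, if j ≤ k then y i j else 0) = ((k : ℕ) + 1) / n) :
    convexHull ℝ {v : Fin n → ℝ | ∃ (ℓ : Fin n → ℕ) (ε : Fin n → ℝ),
        (∑ i, ℓ i ≤ n) ∧ (∀ i, ε i = 1 ∨ ε i = -1) ∧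
        v = fun i => ε i * ∑ j : Fin n, if (j : ℕ) < ℓ i then y i j else 0}
      ⊆ {x : Fin n → ℝ | ∑ i, M i (|x i|) ≤ 1} := by
  intro x hx
  rcases Nat.eq_zero_or_pos n with hn | hn
  · subst hn; simp [Set.mem_setOf_eq]
  rw [_root_.convexHull_eq] at hx
  obtain ⟨ι, t, w, z, hw0, hw1, hz, hcm⟩ := hx
  choose! ℓf εf hℓ hε hzeq using hz
  have hnpos : (0:ℝ) < n := by exact_mod_cast hn
  -- absolute values of generator coordinates
  have habs : ∀ s ∈ t, ∀ i : Fin n,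
      |z s i| = ∑ j : Fin n, if (j:ℕ) < ℓf s i then y i j else 0 := by
    intro s hs i
    have hsumnn : 0 ≤ ∑ j : Fin n, if (j:ℕ) < ℓf s i then y i j else 0 := by
      apply Finset.sum_nonneg; intro j _
      split_ifs with h
      · exact (hpos i j).le
      · exact le_refl 0
    have hε1 : |εf s i| = 1 := by rcases hε s hs i with h | h <;> simp [h]
    have : z s i = εf s i * ∑ j : Fin n, if (j:ℕ) < ℓf s i then y i j else 0 := by
      rw [hzeq s hs]
    rw [this, abs_mul, hε1, one_mul, abs_of_nonneg hsumnn]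
  -- value of M at generators
  have hgen : ∀ s ∈ t, ∀ i : Fin n, M i (|z s i|) = (ℓf s i : ℝ) / n := by
    intro s hs i
    rw [habs s hs i]
    by_cases hℓ0 : ℓf s i = 0
    · simp [hℓ0, hzero i]
    · have h1 : 1 ≤ ℓf s i := Nat.one_le_iff_ne_zero.mpr hℓ0
      have hle : ℓf s i ≤ n := by
        have := Finset.single_le_sum (f := ℓf s) (fun j _ => Nat.zero_le _) (mem_univ i)
        exact le_trans this (hℓ s hs)
      set k : Fin n := ⟨ℓf s i - 1, by omega⟩ with hk
      have heq : (∑ j : Fin n, if (j:ℕ) < ℓf s i then y i j else 0)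
          = ∑ j : Fin n, if j ≤ k then y i j else 0 := by
        apply Finset.sum_congr rfl
        intro j _
        have : ((j:ℕ) < ℓf s i) ↔ (j ≤ k) := by
          rw [Fin.le_def]
          simp only [hk]
          omega
        simp [this]
      rw [heq, hval i k]
      have hkv : (k:ℕ) = ℓf s i - 1 := rfl
      have : ((k:ℕ) : ℝ) + 1 = (ℓf s i : ℝ) := by
        rw [hkv]; exact_mod_cast Nat.sub_add_cancel h1
      rw [this]
  -- x as convex combination
  have hx_eq : ∀ i, x i = ∑ s ∈ t, w s * z s i := by
    intro i
    rw [← hcm, Finset.centerMass_eq_of_sum_1 _ _ hw1]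
    simp [Finset.sum_apply]
  -- coordinatewise bound
  have key : ∀ i, M i (|x i|) ≤ ∑ s ∈ t, w s * ((ℓf s i : ℝ) / n) := by
    intro i
    have hc0 : 0 ≤ ∑ s ∈ t, w s * ((ℓf s i : ℝ) / n) := by
      apply Finset.sum_nonneg; intro s hs
      exact mul_nonneg (hw0 s hs) (div_nonneg (Nat.cast_nonneg _) hnpos.le)
    have hxb : |x i| ≤ ∑ s ∈ t, w s * |z s i| := by
      rw [hx_eq i]
      calc |∑ s ∈ t, w s * z s i| ≤ ∑ s ∈ t, |w s * z s i| :=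
            Finset.abs_sum_le_sum_abs _ _
        _ = ∑ s ∈ t, w s * |z s i| := by
            apply Finset.sum_congr rfl; intro s hs
            rw [abs_mul, abs_of_nonneg (hw0 s hs)]
    have hMb : M i (∑ s ∈ t, w s * |z s i|) ≤ ∑ s ∈ t, w s * ((ℓf s i : ℝ) / n) := by
      have hmem : ∀ s ∈ t, |z s i| ∈ Set.Ici (0:ℝ) := fun s _ => Set.mem_Ici.mpr (abs_nonneg _)
      have := (hconv i).map_sum_le hw0 hw1 hmem
      refine le_trans (by simpa [smul_eq_mul] using this) ?_
      apply le_of_eq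
      apply Finset.sum_congr rfl
      intro s hs
      rw [hgen s hs i]
    exact convex_mono_aux (hconv i) (hzero i) (abs_nonneg _) hxb hMb hc0
  -- sum up
  calc ∑ i, M i (|x i|) ≤ ∑ i, ∑ s ∈ t, w s * ((ℓf s i : ℝ) / n) :=
        Finset.sum_le_sum (fun i _ => key i)
    _ = ∑ s ∈ t, w s * ((∑ i, (ℓf s i : ℝ)) / n) := by
        rw [Finset.sum_comm]
        apply Finset.sum_congr rfl
        intro s _
        rw [Finset.sum_div, Finset.mul_sum]
    _ ≤ ∑ s ∈ t, w s * 1 := by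
        apply Finset.sum_le_sum
        intro s hs
        apply mul_le_mul_of_nonneg_left _ (hw0 s hs)
        rw [div_le_one hnpos]
        exact_mod_cast hℓ s hs
    _ = 1 := by simp [hw1]
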